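/- The exterior algebra ΛV of an n-dimensional vector space V (n ≥ 2, over a field of characteristic ≠ 2) is a symmetric algebra if and only if n is odd. -/

import Mathlib

open ExteriorAlgebra
open Module

namespace Stmt13Aux

variable {K : Type} [Field K] {V : Type} [AddCommGroup V] [Module K V] {n : ℕ}

/-- Product of `ι` of basis vectors along a list of indices. -/
noncomputable def wb (b : Basis (Fin n) K V) (l : List (Fin n)) : ExteriorAlgebra K V :=
  (l.map fun i => ι K (b i)).prod

theorem wb_nil (b : Basis (Fin n) K V) : wb b [] = 1 := rfl

theorem wb_cons (b : Basis (Fin n) K V) (a : Fin n) (l : List (Fin n)) :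
    wb b (a :: l) = ι K (b a) * wb b l := by
  simp [wb]

theorem wb_append (b : Basis (Fin n) K V) (l l' : List (Fin n)) :
    wb b (l ++ l') = wb b l * wb b l' := by
  simp [wb]

theorem ι_anticomm (x y : V) : ι K x * ι K y = -(ι K y * ι K x) :=
  eq_neg_of_add_eq_zero_left (ι_add_mul_swap x y)

theorem wb_mul_ι (b : Basis (Fin n) K V) (l : List (Fin n)) (x : V) :
    wb b l * ι K x = ((-1 : K) ^ l.length) • (ι K x * wb b l) := by
  induction l with
  | nil => simp [wb_nil]
  | cons a t ih =>
      rw [wb_cons, mul_assoc, ih, mul_smul_comm, ← mul_assoc, ι_anticomm (b a) x,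
        List.length_cons, pow_succ, neg_mul, mul_assoc, mul_smul]
      simp

theorem ι_mul_wb_of_mem (b : Basis (Fin n) K V) (l : List (Fin n)) (x : Fin n) (hx : x ∈ l) :
    ι K (b x) * wb b l = 0 := by
  induction l with
  | nil => simp at hx
  | cons a t ih =>
      rw [wb_cons, ← mul_assoc]
      rcases List.mem_cons.mp hx with h | h
      · subst h; rw [ι_sq_zero, zero_mul]
      · rw [ι_anticomm (b x) (b a), neg_mul, mul_assoc, ih h, mul_zero, neg_zero]

theorem wb_eq_zero_of_not_nodup (b : Basis (Fin n) K V) (l : List (Fin n)) (h : ¬ l.Nodup) :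
    wb b l = 0 := by
  induction l with
  | nil => simp at h
  | cons a t ih =>
      rw [List.nodup_cons] at h
      push_neg at h
      by_cases ha : a ∈ t
      · rw [wb_cons, ι_mul_wb_of_mem b t a ha]
      · rw [wb_cons, ih (h ha), mul_zero]

theorem wb_mul_wb (b : Basis (Fin n) K V) (l l' : List (Fin n)) :
    wb b l * wb b l' = ((-1 : K) ^ (l.length * l'.length)) • (wb b l' * wb b l) := by
  induction l' with
  | nil => simp [wb_nil]
  | cons a t ih =>
      rw [wb_cons, ← mul_assoc, wb_mul_ι, smul_mul_assoc, mul_assoc, ih, mul_smul_comm,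
        smul_smul, ← pow_add, ← mul_assoc, ← wb_cons, List.length_cons]
      ring_nf

theorem wb_perm (b : Basis (Fin n) K V) {l l' : List (Fin n)} (h : l.Perm l') :
    ∃ ε : K, ε * ε = 1 ∧ wb b l = ε • wb b l' := by
  induction h with
  | nil => exact ⟨1, by ring, by simp⟩
  | cons x h ih =>
      obtain ⟨ε, h1, h2⟩ := ih
      exact ⟨ε, h1, by rw [wb_cons, wb_cons, h2, mul_smul_comm]⟩
  | swap x y l =>
      refine ⟨-1, by ring, ?_⟩
      rw [wb_cons, wb_cons, wb_cons, wb_cons, ← mul_assoc, ← mul_assoc,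
        ι_anticomm (b y) (b x), neg_mul, neg_smul, one_smul]
  | trans h1 h2 ih1 ih2 =>
      obtain ⟨ε, he1, he2⟩ := ih1
      obtain ⟨ε', he1', he2'⟩ := ih2
      refine ⟨ε * ε', by rw [mul_mul_mul_comm, he1, he1', one_mul], ?_⟩
      rw [he2, he2', smul_smul]

end Stmt13Aux

namespace Stmt13Aux2
open ExteriorAlgebra Stmt13Aux

variable {K : Type} [Field K] {V : Type} [AddCommGroup V] [Module K V] {n : ℕ}

/-- basis monomial indexed by a finset -/
noncomputable def eS (b : Basis (Fin n) K V) (S : Finset (Fin n)) : ExteriorAlgebra K V :=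
  wb b (S.sort (· ≤ ·))

theorem eS_empty (b : Basis (Fin n) K V) : eS b ∅ = 1 := by
  simp [eS, Finset.sort_empty, wb_nil]

theorem eS_singleton (b : Basis (Fin n) K V) (i : Fin n) : eS b {i} = ι K (b i) := by
  simp [eS, Finset.sort_singleton, wb_cons, wb_nil]

theorem sort_erase (S : Finset (Fin n)) (i : Fin n) :
    (S.sort (· ≤ ·)).erase i = (S.erase i).sort (· ≤ ·) := by
  refine (fun hp h1 h2 => List.Perm.eq_of_pairwise' (r := (· ≤ ·)) h1 h2 hp) ?_ ?_ ?_
  · rw [List.perm_ext_iff_of_nodup ((Finset.sort_nodup _ _).erase i) (Finset.sort_nodup _ _)]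
    intro a
    simp [List.Nodup.mem_erase_iff (Finset.sort_nodup S _), Finset.mem_sort, Finset.mem_erase]
  · exact (Finset.pairwise_sort _ _).erase _
  · exact Finset.pairwise_sort _ _

theorem sort_eq_cons {S : Finset (Fin n)} {a : Fin n} {t : List (Fin n)}
    (h : S.sort (· ≤ ·) = a :: t) : t = (S.erase a).sort (· ≤ ·) := by
  rw [← sort_erase, h, List.erase_cons_head]

/-- contraction by the `i`-th coordinate functional -/
noncomputable def Dc (b : Basis (Fin n) K V) (i : Fin n) :
    ExteriorAlgebra K V →ₗ[K] ExteriorAlgebra K V :=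
  CliffordAlgebra.contractLeft (Q := (0 : QuadraticForm K V)) (b.coord i)

theorem Dc_ι_mul (b : Basis (Fin n) K V) (i : Fin n) (v : V) (x : ExteriorAlgebra K V) :
    Dc b i (ι K v * x) = b.coord i v • x - ι K v * Dc b i x :=
  CliffordAlgebra.contractLeft_ι_mul _ v x

theorem Dc_one (b : Basis (Fin n) K V) (i : Fin n) : Dc b i 1 = 0 :=
  CliffordAlgebra.contractLeft_one _ _

theorem coord_basis (b : Basis (Fin n) K V) (i j : Fin n) :
    b.coord i (b j) = if j = i then 1 else 0 := by
  rw [Basis.coord_apply, Basis.repr_self, Finsupp.single_apply]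

theorem Dc_wb_of_not_mem (b : Basis (Fin n) K V) (i : Fin n) (l : List (Fin n)) (h : i ∉ l) :
    Dc b i (wb b l) = 0 := by
  induction l with
  | nil => exact Dc_one b i
  | cons a t ih =>
      rw [wb_cons, Dc_ι_mul, coord_basis, if_neg (by rintro rfl; exact h List.mem_cons_self),
        zero_smul, zero_sub, ih (fun hm => h (List.mem_cons_of_mem _ hm)), mul_zero, neg_zero]

theorem Dc_wb_of_mem (b : Basis (Fin n) K V) (i : Fin n) (l : List (Fin n)) (hn : l.Nodup)
    (h : i ∈ l) : ∃ ε : K, ε * ε = 1 ∧ Dc b i (wb b l) = ε • wb b (l.erase i) := by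
  induction l with
  | nil => simp at h
  | cons a t ih =>
      rw [List.nodup_cons] at hn
      rcases List.mem_cons.mp h with rfl | hmem
      · refine ⟨1, by ring, ?_⟩
        rw [wb_cons, Dc_ι_mul, coord_basis, if_pos rfl, one_smul,
          Dc_wb_of_not_mem b i t hn.1, mul_zero, sub_zero, List.erase_cons_head, one_smul]
      · obtain ⟨ε, h1, h2⟩ := ih hn.2 hmem
        have hia : i ≠ a := by rintro rfl; exact hn.1 hmem
        refine ⟨-ε, by rw [neg_mul_neg, h1], ?_⟩
        rw [wb_cons, Dc_ι_mul, coord_basis, if_neg (by simpa using hia.symm), zero_smul, zero_sub,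
          h2, List.erase_cons_tail (by simpa using hia.symm), wb_cons, mul_smul_comm, ← neg_smul]

end Stmt13Aux2

namespace Stmt13Aux3
open ExteriorAlgebra Stmt13Aux Stmt13Aux2

variable {K : Type} [Field K] {V : Type} [AddCommGroup V] [Module K V] {n : ℕ}

theorem Dc_eS_of_mem (b : Basis (Fin n) K V) (i : Fin n) (S : Finset (Fin n)) (h : i ∈ S) :
    ∃ ε : K, ε * ε = 1 ∧ Dc b i (eS b S) = ε • eS b (S.erase i) := by
  obtain ⟨ε, h1, h2⟩ := Dc_wb_of_mem b i (S.sort (· ≤ ·)) (Finset.sort_nodup _ _)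
    ((Finset.mem_sort _).mpr h)
  exact ⟨ε, h1, by rw [eS, h2, sort_erase]; rfl⟩

theorem Dc_eS_of_not_mem (b : Basis (Fin n) K V) (i : Fin n) (S : Finset (Fin n)) (h : i ∉ S) :
    Dc b i (eS b S) = 0 :=
  Dc_wb_of_not_mem b i _ (fun hm => h ((Finset.mem_sort _).mp hm))

/-- iterated contraction along a list, head applied first -/
noncomputable def Dchain (b : Basis (Fin n) K V) : List (Fin n) →
    ExteriorAlgebra K V →ₗ[K] ExteriorAlgebra K V
  | [] => LinearMap.id
  | a :: t => (Dchain b t).comp (Dc b a)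

theorem Dchain_eS (b : Basis (Fin n) K V) (l : List (Fin n)) (hl : l.Nodup) (S : Finset (Fin n)) :
    ∃ ε : K, ε * ε = 1 ∧
      Dchain b l (eS b S) = if l.toFinset ⊆ S then ε • eS b (S \ l.toFinset) else 0 := by
  induction l generalizing S with
  | nil => exact ⟨1, by ring, by simp [Dchain]⟩
  | cons a t ih =>
      rw [List.nodup_cons] at hl
      by_cases ha : a ∈ S
      · obtain ⟨ε₁, h1, h2⟩ := Dc_eS_of_mem b a S ha
        obtain ⟨ε₂, h3, h4⟩ := ih hl.2 (S.erase a)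
        refine ⟨ε₁ * ε₂, by rw [mul_mul_mul_comm, h1, h3, one_mul], ?_⟩
        have hsub : t.toFinset ⊆ S.erase a ↔ (a :: t).toFinset ⊆ S := by
          constructor
          · intro hs
            simp only [List.toFinset_cons, Finset.insert_subset_iff]
            exact ⟨ha, hs.trans (Finset.erase_subset _ _)⟩
          · intro hs i hi
            refine Finset.mem_erase.mpr ⟨?_, hs (by simp [List.mem_toFinset.mp hi])⟩
            rintro rfl
            exact hl.1 (List.mem_toFinset.mp hi)
        have hdiff : S.erase a \ t.toFinset = S \ (a :: t).toFinset := by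
          ext j
          simp only [Finset.mem_sdiff, Finset.mem_erase, List.toFinset_cons, Finset.mem_insert]
          tauto
        rw [Dchain, LinearMap.comp_apply, h2, map_smul, h4, hdiff]
        by_cases hc : (a :: t).toFinset ⊆ S
        · rw [if_pos (hsub.mpr hc), if_pos hc, smul_smul]
        · rw [if_neg (fun hh => hc (hsub.mp hh)), if_neg hc, smul_zero]
      · refine ⟨1, by ring, ?_⟩
        rw [Dchain, LinearMap.comp_apply, Dc_eS_of_not_mem b a S ha, map_zero,
          if_neg (fun hh => ha (hh (by simp)))]

theorem algebraMapInv_eS (b : Basis (Fin n) K V) (S : Finset (Fin n)) :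
    algebraMapInv (eS b S) = if S = ∅ then 1 else 0 := by
  by_cases h : S = ∅
  · subst h; simp [eS_empty]
  · rw [if_neg h]
    obtain ⟨a, ha⟩ := Finset.nonempty_iff_ne_empty.mpr h
    have hmem : a ∈ S.sort (· ≤ ·) := (Finset.mem_sort _).mpr ha
    obtain ⟨l₁, l₂, hl⟩ := List.append_of_mem hmem
    rw [eS, hl, wb_append, wb_cons, map_mul, map_mul]
    have : (algebraMapInv (R := K) (M := V)) (ι K (b a)) = 0 := by
      simp [algebraMapInv]
    rw [this, zero_mul, mul_zero]

/-- the dual functional picking the coefficient of `eS S` -/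
noncomputable def lam (b : Basis (Fin n) K V) (S : Finset (Fin n)) :
    ExteriorAlgebra K V →ₗ[K] K :=
  (algebraMapInv (R := K) (M := V)).toLinearMap.comp (Dchain b (S.sort (· ≤ ·)))

theorem lam_eS (b : Basis (Fin n) K V) (S T : Finset (Fin n)) :
    ∃ ε : K, ε * ε = 1 ∧ lam b S (eS b T) = if T = S then ε else 0 := by
  obtain ⟨ε, h1, h2⟩ := Dchain_eS b (S.sort (· ≤ ·)) (Finset.sort_nodup _ _) T
  rw [Finset.sort_toFinset] at h2
  refine ⟨ε, h1, ?_⟩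
  rw [lam, LinearMap.comp_apply, h2]
  by_cases hc : S ⊆ T
  · rw [if_pos hc]
    simp only [map_smul, AlgHom.toLinearMap_apply, algebraMapInv_eS, smul_eq_mul]
    rcases eq_or_ne T S with rfl | hne
    · rw [if_pos rfl, if_pos (by simp), mul_one]
    · rw [if_neg hne, if_neg (fun hh => hne (Finset.Subset.antisymm
        (Finset.sdiff_eq_empty_iff_subset.mp hh) hc)), mul_zero]
  · rw [if_neg hc, map_zero, if_neg (fun hh => hc (by rw [hh]))]

theorem eS_linearIndependent (b : Basis (Fin n) K V) :
    LinearIndependent K (eS b) := by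
  rw [linearIndependent_iff']
  intro s g hsum i hi
  obtain ⟨ε, h1, h2⟩ := lam_eS b i i
  have hε : ε ≠ 0 := left_ne_zero_of_mul_eq_one h1
  have := congrArg (lam b i) hsum
  rw [map_sum, map_zero] at this
  have hsum2 : ∑ j ∈ s, g j * lam b i (eS b j) = 0 := by
    simpa [smul_eq_mul] using this
  rw [Finset.sum_eq_single i (fun j _ hj => by
      obtain ⟨ε', _, h2'⟩ := lam_eS b i j
      rw [h2', if_neg hj, mul_zero])
    (fun h => absurd hi h)] at hsum2
  rw [h2, if_pos rfl] at hsum2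
  exact (mul_eq_zero.mp hsum2).resolve_right hε

theorem eS_mul_eS_of_disjoint (b : Basis (Fin n) K V) {S T : Finset (Fin n)}
    (h : Disjoint S T) : ∃ ε : K, ε * ε = 1 ∧ eS b S * eS b T = ε • eS b (S ∪ T) := by
  have hperm : (S.sort (· ≤ ·) ++ T.sort (· ≤ ·)).Perm ((S ∪ T).sort (· ≤ ·)) := by
    rw [List.perm_ext_iff_of_nodup ?h1 (Finset.sort_nodup _ _)]
    · intro a
      simp [Finset.mem_sort, Finset.mem_union]
    · rw [List.nodup_append]
      refine ⟨Finset.sort_nodup _ _, Finset.sort_nodup _ _, ?_⟩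
      intro a ha c hb hac
      subst hac
      exact Finset.disjoint_left.mp h ((Finset.mem_sort _).mp ha) ((Finset.mem_sort _).mp hb)
  obtain ⟨ε, h1, h2⟩ := wb_perm b hperm
  exact ⟨ε, h1, by rw [eS, eS, ← wb_append, h2]; rfl⟩

theorem eS_mul_eS_of_not_disjoint (b : Basis (Fin n) K V) {S T : Finset (Fin n)}
    (h : ¬ Disjoint S T) : eS b S * eS b T = 0 := by
  rw [eS, eS, ← wb_append]
  apply wb_eq_zero_of_not_nodup
  rw [List.nodup_append]
  rintro ⟨-, -, hd⟩
  obtain ⟨a, haS, haT⟩ := Finset.not_disjoint_iff.mp h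
  exact hd a ((Finset.mem_sort _).mpr haS) a ((Finset.mem_sort _).mpr haT) rfl

theorem eS_span (b : Basis (Fin n) K V) :
    ⊤ ≤ Submodule.span K (Set.range (eS b)) := by
  set M := Submodule.span K (Set.range (eS b)) with hM
  rintro x -
  have hmul : ∀ y z : ExteriorAlgebra K V, y ∈ M → z ∈ M → y * z ∈ M := by
    intro y z hy hz
    have hle : M * M ≤ M := by
      rw [hM, Submodule.span_mul_span, Submodule.span_le]
      rintro w ⟨u, ⟨S, rfl⟩, v, ⟨T, rfl⟩, rfl⟩
      simp only [SetLike.mem_coe]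
      show eS b S * eS b T ∈ Submodule.span K (Set.range (eS b))
      by_cases hd : Disjoint S T
      · obtain ⟨ε, _, h2⟩ := eS_mul_eS_of_disjoint b hd
        rw [h2]
        exact Submodule.smul_mem _ _ (Submodule.subset_span ⟨S ∪ T, rfl⟩)
      · rw [eS_mul_eS_of_not_disjoint b hd]
        exact Submodule.zero_mem _
    exact hle (Submodule.mul_mem_mul hy hz)
  induction x using CliffordAlgebra.induction with
  | algebraMap r =>
      rw [Algebra.algebraMap_eq_smul_one]
      exact M.smul_mem r (by rw [← eS_empty b]; exact Submodule.subset_span ⟨∅, rfl⟩)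
  | ι v =>
      have : ι K v = ∑ i, b.repr v i • ι K (b i) := by
        conv_lhs => rw [← b.sum_repr v]
        rw [map_sum]
        simp
      rw [this]
      refine Submodule.sum_mem _ fun i _ => Submodule.smul_mem _ _ ?_
      rw [← eS_singleton b i]
      exact Submodule.subset_span ⟨{i}, rfl⟩
  | mul x y hx hy => exact hmul x y hx hy
  | add x y hx hy => exact M.add_mem hx hy

/-- the monomial basis of the exterior algebra -/
noncomputable def eB (b : Basis (Fin n) K V) : Basis (Finset (Fin n)) K (ExteriorAlgebra K V) :=
  Basis.mk (eS_linearIndependent b) (eS_span b)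

theorem eB_apply (b : Basis (Fin n) K V) (S : Finset (Fin n)) : eB b S = eS b S :=
  Basis.mk_apply _ _ _

end Stmt13Aux3

namespace Stmt13Aux4
open ExteriorAlgebra Stmt13Aux Stmt13Aux2 Stmt13Aux3

variable {K : Type} [Field K] {V : Type} [AddCommGroup V] [Module K V] {n : ℕ}

/-- the "top coefficient" trace functional -/
noncomputable def fB (b : Basis (Fin n) K V) : Module.Dual K (ExteriorAlgebra K V) :=
  (eB b).coord Finset.univ

theorem fB_eS (b : Basis (Fin n) K V) (S : Finset (Fin n)) :
    fB b (eS b S) = if S = Finset.univ then 1 else 0 := by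
  rw [fB, ← eB_apply, Basis.coord_apply, Basis.repr_self, Finsupp.single_apply]

theorem fB_mul_eS_eq_zero (b : Basis (Fin n) K V) {S T : Finset (Fin n)}
    (h : S ∪ T ≠ Finset.univ ∨ ¬ Disjoint S T) : fB b (eS b S * eS b T) = 0 := by
  by_cases hd : Disjoint S T
  · obtain ⟨ε, _, h2⟩ := eS_mul_eS_of_disjoint b hd
    rw [h2, map_smul, fB_eS, if_neg (h.resolve_right (fun hh => hh hd)), smul_zero]
  · rw [eS_mul_eS_of_not_disjoint b hd, map_zero]

/-- the bilinear pairing `(x, y) ↦ fB (x * y)`, curried as a map into the dual -/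
noncomputable def PhiB (b : Basis (Fin n) K V) :
    ExteriorAlgebra K V →ₗ[K] Module.Dual K (ExteriorAlgebra K V) :=
  LinearMap.compr₂ (LinearMap.mul K (ExteriorAlgebra K V)) (fB b)

theorem PhiB_apply (b : Basis (Fin n) K V) (x y : ExteriorAlgebra K V) :
    PhiB b x y = fB b (x * y) := rfl

theorem fB_comm (b : Basis (Fin n) K V) (hodd : Odd n) (x y : ExteriorAlgebra K V) :
    fB b (x * y) = fB b (y * x) := by
  have key : ∀ S T : Finset (Fin n), fB b (eS b S * eS b T) = fB b (eS b T * eS b S) := by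
    intro S T
    by_cases hd : Disjoint S T
    · by_cases hu : S ∪ T = Finset.univ
      · have hcard : S.card + T.card = n := by
          have hc := Finset.card_union_of_disjoint hd
          rw [hu, Finset.card_univ, Fintype.card_fin] at hc
          omega
        have heven : Even (S.card * T.card) := by
          rcases Nat.even_or_odd S.card with h | h
          · exact h.mul_right _
          · rcases Nat.even_or_odd T.card with h' | h'
            · exact h'.mul_left _
            · exfalso
              have := h.add_odd h'
              rw [hcard] at this
              exact (Nat.not_odd_iff_even.mpr this) hodd
        have hcomm : eS b S * eS b T = eS b T * eS b S := by
          rw [eS, eS, wb_mul_wb, Finset.length_sort, Finset.length_sort,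
            Even.neg_one_pow heven, one_smul]
        rw [hcomm]
      · rw [fB_mul_eS_eq_zero b (Or.inl hu),
          fB_mul_eS_eq_zero b (Or.inl (by rwa [Finset.union_comm]))]
    · rw [fB_mul_eS_eq_zero b (Or.inr hd),
        fB_mul_eS_eq_zero b (Or.inr (fun hh => hd hh.symm))]
  have hΦ : PhiB b = (PhiB b).flip := by
    apply Basis.ext (eB b)
    intro S
    apply Basis.ext (eB b)
    intro T
    rw [LinearMap.flip_apply, PhiB_apply, PhiB_apply, eB_apply, eB_apply]
    exact key S T
  have h2 := LinearMap.congr_fun (LinearMap.congr_fun hΦ x) y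
  rwa [LinearMap.flip_apply, PhiB_apply, PhiB_apply] at h2

theorem fB_pair (b : Basis (Fin n) K V) (S : Finset (Fin n)) :
    ∃ ε : K, ε ≠ 0 ∧ ∀ x, fB b (x * eS b Sᶜ) = ε * (eB b).coord S x := by
  obtain ⟨ε, hεε, hmul⟩ := eS_mul_eS_of_disjoint b (disjoint_compl_right : Disjoint S Sᶜ)
  refine ⟨ε, left_ne_zero_of_mul_eq_one hεε, ?_⟩
  have key : (PhiB b).flip (eS b Sᶜ) = ε • (eB b).coord S := by
    apply Basis.ext (eB b)
    intro T
    rw [LinearMap.flip_apply, PhiB_apply, LinearMap.smul_apply, Basis.coord_apply,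
      Basis.repr_self, Finsupp.single_apply, smul_eq_mul, eB_apply]
    rcases eq_or_ne T S with rfl | hne
    · rw [hmul, map_smul, Finset.union_compl, fB_eS, if_pos rfl, smul_eq_mul, mul_one,
        if_pos rfl, mul_one]
    · rw [if_neg hne, mul_zero]
      by_cases hd : Disjoint T Sᶜ
      · refine fB_mul_eS_eq_zero b (Or.inl ?_)
        intro hu
        apply hne
        apply Finset.Subset.antisymm
        · intro a ha
          by_contra hc
          exact (Finset.disjoint_left.mp hd ha) (Finset.mem_compl.mpr hc)
        · intro a ha
          have hmemu : a ∈ T ∪ Sᶜ := hu ▸ Finset.mem_univ a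
          rcases Finset.mem_union.mp hmemu with h | h
          · exact h
          · exact absurd ha (Finset.mem_compl.mp h)
      · exact fB_mul_eS_eq_zero b (Or.inr hd)
  intro x
  have h3 := LinearMap.congr_fun key x
  rw [LinearMap.flip_apply, PhiB_apply] at h3
  rw [h3, LinearMap.smul_apply, smul_eq_mul]

theorem PhiB_injective (b : Basis (Fin n) K V) : Function.Injective (PhiB b) := by
  rw [← LinearMap.ker_eq_bot]
  apply LinearMap.ker_eq_bot'.mpr
  intro x hx
  apply ((eB b).forall_coord_eq_zero_iff).mp
  intro S
  obtain ⟨ε, hε, hp⟩ := fB_pair b S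
  have h0 : fB b (x * eS b Sᶜ) = 0 := by
    have h1 := LinearMap.congr_fun hx (eS b Sᶜ)
    rwa [PhiB_apply, LinearMap.zero_apply] at h1
  rw [hp x] at h0
  exact (mul_eq_zero.mp h0).resolve_left hε

end Stmt13Aux4

open ExteriorAlgebra Stmt13Aux Stmt13Aux2 Stmt13Aux3 Stmt13Aux4 in
/-- **Exterior algebra.**  The exterior algebra `ΛV` of an `n`-dimensional vector space
`V` (`n ≥ 2`, over a field of characteristic `≠ 2`) is a symmetric algebra
(`ΛV ≅ (ΛV)*` as bimodules, unfolded via `φ(a·x)(y) = φ(x)(y·a)` and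
`φ(x·a)(y) = φ(x)(a·y)`) if and only if `n` is odd. -/
theorem stmt13 (K : Type) [Field K] (h2 : (2 : K) ≠ 0)
    (V : Type) [AddCommGroup V] [Module K V] [FiniteDimensional K V]
    (n : ℕ) (hn : 2 ≤ n) (hdim : Module.finrank K V = n) :
    (∃ φ : ExteriorAlgebra K V ≃ₗ[K] Module.Dual K (ExteriorAlgebra K V),
        (∀ a x y : ExteriorAlgebra K V, φ (a * x) y = φ x (y * a)) ∧
        (∀ a x y : ExteriorAlgebra K V, φ (x * a) y = φ x (a * y))) ↔
    Odd n := by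
  have b : Basis (Fin n) K V := Module.finBasisOfFinrankEq K V hdim
  constructor
  · rintro ⟨φ, hφ1, hφ2⟩
    by_contra hodd
    have heven : Even n := Nat.not_odd_iff_even.mp hodd
    -- trace property of φ 1
    have htr : ∀ u v : ExteriorAlgebra K V, φ 1 (u * v) = φ 1 (v * u) := by
      intro u v
      have h1 := hφ1 v 1 u
      have h2' := hφ2 v 1 u
      rw [mul_one] at h1
      rw [one_mul] at h2'
      rw [← h1, ← h2']
    have hEne : eS b Finset.univ ≠ 0 := by
      rw [← eB_apply]
      exact (eB b).ne_zero _
    -- the sorted list of univ is nonempty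
    have hlen : ((Finset.univ : Finset (Fin n)).sort (· ≤ ·)).length = n := by
      rw [Finset.length_sort, Finset.card_univ, Fintype.card_fin]
    obtain ⟨a, t, hs⟩ : ∃ a t, (Finset.univ : Finset (Fin n)).sort (· ≤ ·) = a :: t := by
      cases hs : (Finset.univ : Finset (Fin n)).sort (· ≤ ·) with
      | nil => rw [hs] at hlen; simp at hlen; omega
      | cons a t => exact ⟨a, t, rfl⟩
    have htlen : t.length = n - 1 := by
      rw [hs] at hlen
      simp at hlen
      omega
    -- φ 1 vanishes on the top monomial
    have fE0 : φ 1 (eS b Finset.univ) = 0 := by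
      have hEexp : eS b Finset.univ = ι K (b a) * wb b t := by rw [eS, hs, wb_cons]
      have hneg : φ 1 (eS b Finset.univ) = - φ 1 (eS b Finset.univ) := by
        conv_lhs => rw [hEexp, htr]
        rw [wb_mul_ι, htlen]
        have hpow : ((-1 : K) ^ (n - 1)) = -1 :=
          Odd.neg_one_pow (Nat.Even.sub_odd (by omega) heven odd_one)
        rw [hpow, map_smul, ← hEexp, smul_eq_mul, neg_one_mul]
      have h0 : (2 : K) * φ 1 (eS b Finset.univ) = 0 := by
        rw [two_mul]
        exact add_eq_zero_iff_eq_neg.mpr hneg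
      exact (mul_eq_zero.mp h0).resolve_left h2
    -- right multiplication by anything maps the top monomial to a multiple of itself
    have hscal : ∀ y : ExteriorAlgebra K V, ∃ r : K,
        eS b Finset.univ * y = r • eS b Finset.univ := by
      intro y
      induction y using CliffordAlgebra.induction with
      | algebraMap r =>
          exact ⟨r, by rw [Algebra.algebraMap_eq_smul_one, mul_smul_comm, mul_one]⟩
      | ι v =>
          refine ⟨0, ?_⟩
          rw [zero_smul]
          have hv : ι K v = ∑ i, b.repr v i • ι K (b i) := by
            conv_lhs => rw [← b.sum_repr v]
            rw [map_sum]
            simp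
          rw [hv, Finset.mul_sum]
          refine Finset.sum_eq_zero fun i _ => ?_
          rw [mul_smul_comm]
          have h0 : eS b Finset.univ * ι K (b i) = 0 := by
            rw [eS, wb_mul_ι, ι_mul_wb_of_mem b _ i (by simp [Finset.mem_sort]), smul_zero]
          rw [h0, smul_zero]
      | mul x y hx hy =>
          obtain ⟨r, hr⟩ := hx
          obtain ⟨s, hs'⟩ := hy
          exact ⟨r * s, by rw [← mul_assoc, hr, smul_mul_assoc, hs', smul_smul]⟩
      | add x y hx hy =>
          obtain ⟨r, hr⟩ := hx
          obtain ⟨s, hs'⟩ := hy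
          exact ⟨r + s, by rw [mul_add, hr, hs', add_smul]⟩
    have hphiE : φ (eS b Finset.univ) = 0 := by
      apply LinearMap.ext
      intro y
      have h := hφ2 (eS b Finset.univ) 1 y
      rw [one_mul] at h
      rw [h]
      obtain ⟨r, hr⟩ := hscal y
      rw [hr, map_smul, fE0, smul_zero, LinearMap.zero_apply]
    exact hEne (φ.injective (by rw [hphiE, map_zero]))
  · intro hodd
    haveI : FiniteDimensional K (ExteriorAlgebra K V) :=
      Module.Finite.of_basis (eB b)
    have hinj := PhiB_injective b
    have hsurj := (LinearMap.injective_iff_surjective_of_finrank_eq_finrank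
      (Subspace.dual_finrank_eq (K := K) (V := ExteriorAlgebra K V)).symm).mp hinj
    refine ⟨LinearEquiv.ofBijective (PhiB b) ⟨hinj, hsurj⟩, ?_, ?_⟩
    · intro a x y
      show PhiB b (a * x) y = PhiB b x (y * a)
      rw [PhiB_apply, PhiB_apply, mul_assoc, fB_comm b hodd, mul_assoc]
    · intro a x y
      show PhiB b (x * a) y = PhiB b x (a * y)
      rw [PhiB_apply, PhiB_apply, mul_assoc]
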